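/- Let (X,d) be a proper geodesic metric space, L : [0,∞) → [0,∞) increasing, convex, superlinear with L(0)=0, H its Legendre transform, and g : X → ℝ Lipschitz with Lipschitz constant lip(g). Then the map (x,t) ↦ Q_t g(x) is Lipschitz on X × (0,∞) with respect to the product metric d(x,ξ) + |t − s|, with Lipschitz constant at most max{lip(g), H(lip(g))}: for all x, ξ ∈ X and s, t > 0, |Q_t g(x) − Q_s g(ξ)| ≤ max{lip(g), H(lip(g))}·(d(x,ξ) + |t − s|). -/

import Mathlib

open Metric Filter NNReal

/-- Hopf–Lax (infimum-convolution) semigroup, with `Q_0 g = g`. -/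
noncomputable def hopfLaxQ {X : Type*} [MetricSpace X] (L : ℝ → ℝ) (g : X → ℝ)
    (t : ℝ) (x : X) : ℝ :=
  if t = 0 then g x else ⨅ y : X, (t * L (dist x y / t) + g y)

/-- The (one-dimensional) Legendre transform `H(w) = sup_{v ≥ 0} (w·v − L(v))`. -/
noncomputable def legendreH (L : ℝ → ℝ) (w : ℝ) : ℝ :=
  sSup ((fun v => w * v - L v) '' Set.Ici 0)

lemma legendreH_bddAbove (L : ℝ → ℝ) (hLnonneg : ∀ u, 0 ≤ u → 0 ≤ L u)
    (hLsuper : Tendsto (fun u => L u / u) atTop atTop) (K : ℝ) (hK : 0 ≤ K) :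
    BddAbove ((fun v => K * v - L v) '' Set.Ici 0) := by
  obtain ⟨M, hM⟩ := (hLsuper.eventually_ge_atTop K).exists_forall_of_atTop
  refine ⟨K * max M 1, ?_⟩
  rintro _ ⟨v, hv, rfl⟩
  simp only [Set.mem_Ici] at hv
  dsimp only
  by_cases h : v ≤ max M 1
  · have h1 : 0 ≤ L v := hLnonneg v hv
    have h2 : K * v ≤ K * max M 1 := mul_le_mul_of_nonneg_left h hK
    linarith
  · push_neg at h
    have hv1 : (1 : ℝ) < v := lt_of_le_of_lt (le_max_right M 1) h
    have hKv : K ≤ L v / v := hM v (le_of_lt (lt_of_le_of_lt (le_max_left M 1) h))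
    have : K * v ≤ L v := by
      rw [le_div_iff₀ (by linarith)] at hKv; linarith
    have : K * max M 1 ≥ 0 := mul_nonneg hK (by positivity)
    linarith

lemma fenchel_ineq (L : ℝ → ℝ) (hLnonneg : ∀ u, 0 ≤ u → 0 ≤ L u)
    (hLsuper : Tendsto (fun u => L u / u) atTop atTop) (K : ℝ) (hK : 0 ≤ K)
    {v : ℝ} (hv : 0 ≤ v) : K * v - L v ≤ legendreH L K :=
  le_csSup (legendreH_bddAbove L hLnonneg hLsuper K hK) ⟨v, hv, rfl⟩

lemma legendreH_nonneg (L : ℝ → ℝ) (hL0 : L 0 = 0) (hLnonneg : ∀ u, 0 ≤ u → 0 ≤ L u)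
    (hLsuper : Tendsto (fun u => L u / u) atTop atTop) (K : ℝ) (hK : 0 ≤ K) :
    0 ≤ legendreH L K := by
  have := fenchel_ineq L hLnonneg hLsuper K hK (le_refl (0:ℝ))
  simpa [hL0] using this

section Aux

variable {X : Type*} [MetricSpace X] [Nonempty X]

lemma hopfLax_bddBelow (L : ℝ → ℝ) (hLnonneg : ∀ u, 0 ≤ u → 0 ≤ L u)
    (hLsuper : Tendsto (fun u => L u / u) atTop atTop)
    (g : X → ℝ) (Kg : ℝ≥0) (hg : LipschitzWith Kg g)
    (x : X) {t : ℝ} (ht : 0 < t) :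
    BddBelow (Set.range fun y : X => t * L (dist x y / t) + g y) := by
  refine ⟨g x - t * legendreH L (Kg : ℝ), ?_⟩
  rintro _ ⟨y, rfl⟩
  have hfe : (Kg : ℝ) * (dist x y / t) - L (dist x y / t) ≤ legendreH L (Kg : ℝ) :=
    fenchel_ineq L hLnonneg hLsuper _ Kg.coe_nonneg (by positivity)
  have hgl : dist (g x) (g y) ≤ (Kg : ℝ) * dist x y := hg.dist_le_mul x y
  rw [Real.dist_eq] at hgl
  have h1 : g x - g y ≤ (Kg : ℝ) * dist x y := (abs_le.mp hgl).2.trans_eq' rfl |>.trans_eq rfl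
  have h2 : (Kg : ℝ) * dist x y - t * L (dist x y / t) ≤ t * legendreH L (Kg : ℝ) := by
    have := mul_le_mul_of_nonneg_left hfe ht.le
    have hd : t * ((Kg : ℝ) * (dist x y / t)) = (Kg : ℝ) * dist x y := by
      field_simp
    nlinarith
  simp only [Set.mem_Ici]
  linarith

/-- Space Lipschitz bound: `Q_t g x ≤ Q_t g ξ + K d(x,ξ)`. -/
lemma hopfLax_space
    (hgeo : ∀ x y : X, ∀ τ : ℝ, 0 ≤ τ → τ ≤ 1 →
      ∃ z : X, dist x z = τ * dist x y ∧ dist z y = (1 - τ) * dist x y)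
    (L : ℝ → ℝ)
    (hLnonneg : ∀ u, 0 ≤ u → 0 ≤ L u)
    (hLmono : MonotoneOn L (Set.Ici 0))
    (hLsuper : Tendsto (fun u => L u / u) atTop atTop)
    (g : X → ℝ) (Kg : ℝ≥0) (hg : LipschitzWith Kg g)
    (x ξ : X) {t : ℝ} (ht : 0 < t) :
    (⨅ y : X, (t * L (dist x y / t) + g y)) ≤
      (⨅ y : X, (t * L (dist ξ y / t) + g y)) + (Kg : ℝ) * dist x ξ := by
  rw [← sub_le_iff_le_add]
  refine le_ciInf fun y => ?_
  rw [sub_le_iff_le_add]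
  have hbdd := hopfLax_bddBelow L hLnonneg hLsuper g Kg hg x ht
  have hKd : 0 ≤ (Kg : ℝ) * dist x ξ := mul_nonneg Kg.coe_nonneg dist_nonneg
  by_cases h : dist x y ≤ dist ξ y
  · have h1 : (⨅ z : X, (t * L (dist x z / t) + g z)) ≤ t * L (dist x y / t) + g y :=
      ciInf_le hbdd y
    have h2 : L (dist x y / t) ≤ L (dist ξ y / t) :=
      hLmono (Set.mem_Ici.mpr (by positivity)) (Set.mem_Ici.mpr (by positivity)) (by gcongr)
    nlinarith
  · push_neg at h
    have hpos : 0 < dist x y := lt_of_le_of_lt dist_nonneg h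
    obtain ⟨z, hz1, hz2⟩ := hgeo x y (dist ξ y / dist x y) (by positivity)
      ((div_le_one hpos).mpr h.le)
    rw [div_mul_cancel₀ _ hpos.ne'] at hz1
    have hz2' : dist z y = dist x y - dist ξ y := by
      rw [hz2, sub_mul, one_mul, div_mul_cancel₀ _ hpos.ne']
    have h1 : (⨅ w : X, (t * L (dist x w / t) + g w)) ≤ t * L (dist x z / t) + g z :=
      ciInf_le hbdd z
    rw [hz1] at h1
    have hgl : dist (g z) (g y) ≤ (Kg : ℝ) * dist z y := hg.dist_le_mul z y
    rw [Real.dist_eq] at hgl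
    have h2 : g z - g y ≤ (Kg : ℝ) * dist z y := (abs_le.mp hgl).2
    have h3 : dist z y ≤ dist x ξ := by
      have := dist_triangle x ξ y
      rw [hz2']; linarith
    have h4 : (Kg : ℝ) * dist z y ≤ (Kg : ℝ) * dist x ξ :=
      mul_le_mul_of_nonneg_left h3 Kg.coe_nonneg
    linarith

/-- Perspective monotonicity: `t L(d/t) ≤ s L(d/s)` for `0 < s ≤ t`. -/
lemma persp (L : ℝ → ℝ) (hL0 : L 0 = 0) (hLconv : ConvexOn ℝ (Set.Ici 0) L)
    {s t d : ℝ} (hs : 0 < s) (hst : s ≤ t) (hd : 0 ≤ d) :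
    t * L (d / t) ≤ s * L (d / s) := by
  have ht : 0 < t := hs.trans_le hst
  have ha : 0 ≤ s / t := by positivity
  have hb : 0 ≤ 1 - s / t := by
    rw [sub_nonneg]; exact (div_le_one ht).mpr hst
  have hcv := hLconv.2 (Set.mem_Ici.mpr (by positivity : (0:ℝ) ≤ d / s))
    (Set.mem_Ici.mpr (le_refl (0:ℝ))) ha hb (by ring)
  have heq : s / t * (d / s) = d / t := by
    rw [div_mul_div_comm, mul_comm t s, mul_div_mul_left _ _ hs.ne']
  simp only [smul_eq_mul, mul_zero, add_zero, hL0, heq] at hcv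
  have := mul_le_mul_of_nonneg_left hcv ht.le
  calc t * L (d / t) ≤ t * (s / t * L (d / s)) := this
    _ = s * L (d / s) := by field_simp

/-- Time monotonicity: `Q_t g x ≤ Q_s g x` for `s ≤ t`. -/
lemma hopfLax_time_mono (L : ℝ → ℝ) (hL0 : L 0 = 0)
    (hLnonneg : ∀ u, 0 ≤ u → 0 ≤ L u)
    (hLconv : ConvexOn ℝ (Set.Ici 0) L)
    (hLsuper : Tendsto (fun u => L u / u) atTop atTop)
    (g : X → ℝ) (Kg : ℝ≥0) (hg : LipschitzWith Kg g)
    (x : X) {s t : ℝ} (hs : 0 < s) (hst : s ≤ t) :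
    (⨅ y : X, (t * L (dist x y / t) + g y)) ≤ (⨅ y : X, (s * L (dist x y / s) + g y)) := by
  have ht : 0 < t := hs.trans_le hst
  refine le_ciInf fun y => ?_
  have h1 : (⨅ z : X, (t * L (dist x z / t) + g z)) ≤ t * L (dist x y / t) + g y :=
    ciInf_le (hopfLax_bddBelow L hLnonneg hLsuper g Kg hg x ht) y
  have h2 := persp L hL0 hLconv hs hst (dist_nonneg : (0:ℝ) ≤ dist x y)
  linarith

/-- Time Lipschitz bound: `Q_s g x ≤ Q_t g x + H(K)(t-s)` for `0 < s ≤ t`. -/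
lemma hopfLax_time_rev
    (hgeo : ∀ x y : X, ∀ τ : ℝ, 0 ≤ τ → τ ≤ 1 →
      ∃ z : X, dist x z = τ * dist x y ∧ dist z y = (1 - τ) * dist x y)
    (L : ℝ → ℝ)
    (hLnonneg : ∀ u, 0 ≤ u → 0 ≤ L u)
    (hLsuper : Tendsto (fun u => L u / u) atTop atTop)
    (g : X → ℝ) (Kg : ℝ≥0) (hg : LipschitzWith Kg g)
    (x : X) {s t : ℝ} (hs : 0 < s) (hst : s ≤ t) :
    (⨅ y : X, (s * L (dist x y / s) + g y)) ≤
      (⨅ y : X, (t * L (dist x y / t) + g y)) + legendreH L (Kg : ℝ) * (t - s) := by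
  have ht : 0 < t := hs.trans_le hst
  rw [← sub_le_iff_le_add]
  refine le_ciInf fun y => ?_
  rw [sub_le_iff_le_add]
  set d := dist x y with hd
  have hd0 : 0 ≤ d := dist_nonneg
  have hτ0 : 0 ≤ s / t := by positivity
  have hτ1 : s / t ≤ 1 := (div_le_one ht).mpr hst
  obtain ⟨z, hz1, hz2⟩ := hgeo x y (s / t) hτ0 hτ1
  have h1 : (⨅ w : X, (s * L (dist x w / s) + g w)) ≤ s * L (dist x z / s) + g z :=
    ciInf_le (hopfLax_bddBelow L hLnonneg hLsuper g Kg hg x hs) z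
  have hxz : dist x z / s = d / t := by
    have hs' : s ≠ 0 := hs.ne'
    have ht' : t ≠ 0 := ht.ne'
    rw [hz1]
    field_simp
    ring
  rw [hxz] at h1
  have hgl : dist (g z) (g y) ≤ (Kg : ℝ) * dist z y := hg.dist_le_mul z y
  rw [Real.dist_eq] at hgl
  have h2 : g z - g y ≤ (Kg : ℝ) * dist z y := (abs_le.mp hgl).2
  have hzy : dist z y = (t - s) * (d / t) := by
    have ht' : t ≠ 0 := ht.ne'
    rw [hz2]; field_simp; rw [hd]
  set v := d / t with hv
  have hv0 : 0 ≤ v := by positivity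
  have hfe : (Kg : ℝ) * v - L v ≤ legendreH L (Kg : ℝ) :=
    fenchel_ineq L hLnonneg hLsuper _ Kg.coe_nonneg hv0
  have hts : 0 ≤ t - s := by linarith
  have h3 : (t - s) * ((Kg : ℝ) * v - L v) ≤ (t - s) * legendreH L (Kg : ℝ) :=
    mul_le_mul_of_nonneg_left hfe hts
  rw [hzy] at h2
  nlinarith

end Aux

/-- `(x,t) ↦ Q_t g(x)` is Lipschitz on `X × (0,∞)` with constant
`max (lip g) (H (lip g))` for the product metric `d(x,ξ) + |t − s|`. -/
theorem hopfLax_lipschitz_spacetime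
    {X : Type*} [MetricSpace X] [ProperSpace X] [Nonempty X]
    (hgeo : ∀ x y : X, ∀ τ : ℝ, 0 ≤ τ → τ ≤ 1 →
      ∃ z : X, dist x z = τ * dist x y ∧ dist z y = (1 - τ) * dist x y)
    (L : ℝ → ℝ) (hL0 : L 0 = 0)
    (hLnonneg : ∀ u, 0 ≤ u → 0 ≤ L u)
    (hLmono : MonotoneOn L (Set.Ici 0))
    (hLconv : ConvexOn ℝ (Set.Ici 0) L)
    (hLsuper : Tendsto (fun u => L u / u) atTop atTop)
    (g : X → ℝ) (Kg : ℝ≥0) (hg : LipschitzWith Kg g)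
    (x ξ : X) (s t : ℝ) (hs : 0 < s) (ht : 0 < t) :
    |hopfLaxQ L g t x - hopfLaxQ L g s ξ| ≤
      max (Kg : ℝ) (legendreH L (Kg : ℝ)) * (dist x ξ + |t - s|) := by
  set K : ℝ := (Kg : ℝ) with hK
  set H : ℝ := legendreH L K with hHdef
  have hK0 : 0 ≤ K := Kg.coe_nonneg
  have hH0 : 0 ≤ H := legendreH_nonneg L hL0 hLnonneg hLsuper K hK0
  set Q : ℝ → X → ℝ := fun r z => ⨅ y : X, (r * L (dist z y / r) + g y) with hQdef
  have hQeq : ∀ (r : ℝ), 0 < r → ∀ z : X, hopfLaxQ L g r z = Q r z := by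
    intro r hr z
    rw [hopfLaxQ, if_neg hr.ne']
  rw [hQeq t ht x, hQeq s hs ξ]
  -- space estimate at time t
  have hspace : |Q t x - Q t ξ| ≤ K * dist x ξ := by
    rw [abs_sub_le_iff]
    constructor
    · have := hopfLax_space hgeo L hLnonneg hLmono hLsuper g Kg hg x ξ ht
      linarith
    · have := hopfLax_space hgeo L hLnonneg hLmono hLsuper g Kg hg ξ x ht
      rw [dist_comm ξ x] at this
      linarith
  -- time estimate at point ξ
  have htime : |Q t ξ - Q s ξ| ≤ H * |t - s| := by
    rcases le_total s t with hst | hts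
    · rw [abs_of_nonneg (by linarith : (0:ℝ) ≤ t - s)]
      rw [abs_sub_le_iff]
      have h1 := hopfLax_time_mono L hL0 hLnonneg hLconv hLsuper g Kg hg ξ hs hst
      have h2 := hopfLax_time_rev hgeo L hLnonneg hLsuper g Kg hg ξ hs hst
      constructor
      · have : 0 ≤ H * (t - s) := mul_nonneg hH0 (by linarith)
        linarith
      · linarith [mul_comm H (t - s) ▸ h2]
    · rw [abs_of_nonpos (by linarith : t - s ≤ 0)]
      rw [abs_sub_le_iff]
      have h1 := hopfLax_time_mono L hL0 hLnonneg hLconv hLsuper g Kg hg ξ ht hts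
      have h2 := hopfLax_time_rev hgeo L hLnonneg hLsuper g Kg hg ξ ht hts
      constructor
      · nlinarith
      · nlinarith
  have htri : |Q t x - Q s ξ| ≤ |Q t x - Q t ξ| + |Q t ξ - Q s ξ| := abs_sub_le _ _ _
  have hKM : K ≤ max K H := le_max_left _ _
  have hHM : H ≤ max K H := le_max_right _ _
  have hd0 : 0 ≤ dist x ξ := dist_nonneg
  have ha0 : 0 ≤ |t - s| := abs_nonneg _
  calc |Q t x - Q s ξ| ≤ K * dist x ξ + H * |t - s| := by linarith
    _ ≤ max K H * dist x ξ + max K H * |t - s| := by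
        exact add_le_add (mul_le_mul_of_nonneg_right hKM hd0)
          (mul_le_mul_of_nonneg_right hHM ha0)
    _ = max K H * (dist x ξ + |t - s|) := by ring
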